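/- Let A be an n×n matrix over ℚ with irreducible characteristic polynomial f, and let p ∈ ℚ[λ]. If f(p(λ)) has a factor h(λ) of degree n in ℚ[λ], then there exists X ∈ M_n(ℚ) with p(X) = A. -/

import Mathlib

open Polynomial

set_option maxHeartbeats 2000000 in
set_option synthInstance.maxHeartbeats 400000 in
theorem stmt1 (n : ℕ) (A : Matrix (Fin n) (Fin n) ℚ) (p : ℚ[X])
    (hf : Irreducible A.charpoly)
    (h : ℚ[X]) (hdeg : h.natDegree = n) (hdvd : h ∣ A.charpoly.comp p) :
    ∃ X : Matrix (Fin n) (Fin n) ℚ, aeval X p = A := by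
  classical
  set f := A.charpoly with hfdef
  have hmono : f.Monic := A.charpoly_monic
  have hfn : f.natDegree = n := by
    rw [hfdef, Matrix.charpoly_natDegree_eq_dim, Fintype.card_fin]
  have hn : n ≠ 0 := by
    intro h0
    apply hf.not_isUnit
    have : f = 1 := hmono.natDegree_eq_zero.mp (by rw [hfn, h0])
    rw [this]; exact isUnit_one
  have h0 : h ≠ 0 := by
    intro hh
    apply hn
    rw [← hdeg, hh, natDegree_zero]
  haveI : Fact (Irreducible f) := ⟨hf⟩
  set t : AdjoinRoot h := AdjoinRoot.root h with ht
  -- f (p t) = 0 in AdjoinRoot h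
  have hfp : aeval (aeval t p) f = 0 := by
    have : aeval t (f.comp p) = 0 := by
      rw [AdjoinRoot.aeval_eq, AdjoinRoot.mk_eq_zero]
      exact hdvd
    rwa [aeval_comp] at this
  set φ : AdjoinRoot f →ₐ[ℚ] AdjoinRoot h := AdjoinRoot.liftAlgHom f (Algebra.ofId ℚ (AdjoinRoot h)) (aeval t p) (by rw [Algebra.toRingHom_ofId, ← aeval_def, hfp]) with hφ
  -- f (A as endomorphism) = 0
  set E := (Matrix.toLinAlgEquiv' : Matrix (Fin n) (Fin n) ℚ ≃ₐ[ℚ]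
      Module.End ℚ (Fin n → ℚ)) with hE
  have hAf : ∀ a : ℚ[X], a ∈ Ideal.span {f} → aeval (E A) a = 0 := by
    intro a ha
    obtain ⟨c, hc⟩ := Ideal.mem_span_singleton'.mp ha
    have hEf : aeval (E A) f = 0 := by
      rw [Polynomial.aeval_algHom_apply E A f, hfdef, Matrix.aeval_self_charpoly, map_zero]
    rw [← hc, map_mul, hEf, mul_zero]
  set ψ : AdjoinRoot f →ₐ[ℚ] Module.End ℚ (Fin n → ℚ) :=
    Ideal.Quotient.liftₐ (R₁ := ℚ) (A := ℚ[X]) (B := Module.End ℚ (Fin n → ℚ))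
      (Ideal.span {f}) (Polynomial.aeval (E A)) hAf with hψ
  have hψroot : ψ (AdjoinRoot.root f) = E A := by
    have h3 : ψ (AdjoinRoot.mk f X) = Polynomial.aeval (R := ℚ) (E A) (Polynomial.X : ℚ[X]) := by
      rw [hψ]
      exact Ideal.Quotient.liftₐ_apply _ _ _ _
    rw [AdjoinRoot.root, h3, aeval_X]
  -- module structures over K := AdjoinRoot f
  letI instKR : Module (AdjoinRoot f) (AdjoinRoot h) := Module.compHom _ φ.toRingHom
  haveI towR : IsScalarTower ℚ (AdjoinRoot f) (AdjoinRoot h) := ⟨fun q k r => by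
    show φ (q • k) * r = q • (φ k * r)
    rw [map_smul, smul_mul_assoc]⟩
  letI instKV : Module (AdjoinRoot f) (Fin n → ℚ) := Module.compHom _ ψ.toRingHom
  haveI towV : IsScalarTower ℚ (AdjoinRoot f) (Fin n → ℚ) := ⟨fun q k v => by
    show ψ (q • k) v = q • (ψ k v)
    rw [map_smul]
    rfl⟩
  -- finrank computations
  have f0 : f ≠ 0 := hmono.ne_zero
  haveI : FiniteDimensional ℚ (AdjoinRoot f) :=
    Module.Finite.of_basis (AdjoinRoot.powerBasis f0).basis
  have hKn : Module.finrank ℚ (AdjoinRoot f) = n := by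
    rw [(AdjoinRoot.powerBasis f0).finrank, AdjoinRoot.powerBasis_dim, hfn]
  haveI : FiniteDimensional ℚ (AdjoinRoot h) :=
    Module.Finite.of_basis (AdjoinRoot.powerBasis h0).basis
  have hRn : Module.finrank ℚ (AdjoinRoot h) = n := by
    rw [(AdjoinRoot.powerBasis h0).finrank, AdjoinRoot.powerBasis_dim, hdeg]
  have hVn : Module.finrank ℚ (Fin n → ℚ) = n := Module.finrank_fin_fun ℚ
  haveI : Module.Finite (AdjoinRoot f) (AdjoinRoot h) :=
    Module.Finite.of_restrictScalars_finite ℚ (AdjoinRoot f) (AdjoinRoot h)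
  haveI : Module.Finite (AdjoinRoot f) (Fin n → ℚ) :=
    Module.Finite.of_restrictScalars_finite ℚ (AdjoinRoot f) (Fin n → ℚ)
  have hKR : Module.finrank (AdjoinRoot f) (AdjoinRoot h) = 1 := by
    have := Module.finrank_mul_finrank ℚ (AdjoinRoot f) (AdjoinRoot h)
    rw [hKn, hRn] at this
    exact Nat.eq_of_mul_eq_mul_left (Nat.pos_of_ne_zero hn) (by rw [this, Nat.mul_one])
  have hKV : Module.finrank (AdjoinRoot f) (Fin n → ℚ) = 1 := by
    have := Module.finrank_mul_finrank ℚ (AdjoinRoot f) (Fin n → ℚ)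
    rw [hKn, hVn] at this
    exact Nat.eq_of_mul_eq_mul_left (Nat.pos_of_ne_zero hn) (by rw [this, Nat.mul_one])
  -- the K-linear equivalence
  let e : AdjoinRoot h ≃ₗ[AdjoinRoot f] (Fin n → ℚ) :=
    LinearEquiv.ofFinrankEq (AdjoinRoot h) (Fin n → ℚ) (by rw [hKR, hKV])
  let e0 : AdjoinRoot h ≃ₗ[ℚ] (Fin n → ℚ) := e.restrictScalars ℚ
  -- the key intertwining property
  have key : ∀ r : AdjoinRoot h, e0 ((aeval t p) * r) = (E A) (e0 r) := by
    intro r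
    calc e0 ((aeval t p) * r) = e ((AdjoinRoot.root f) • r) := by
          have h1 : ((AdjoinRoot.root f) • r : AdjoinRoot h) = φ (AdjoinRoot.root f) * r := rfl
          rw [h1, show φ (AdjoinRoot.root f) = aeval t p from AdjoinRoot.liftAlgHom_root _ _ _ _]
          rfl
      _ = (AdjoinRoot.root f) • e r := map_smul e _ r
      _ = (E A) (e0 r) := by
          have h2 : ((AdjoinRoot.root f) • e r) = ψ (AdjoinRoot.root f) (e r) := rfl
          rw [h2, hψroot]
          rfl
  -- conjugation as an algebra equivalence
  let Φ : Module.End ℚ (AdjoinRoot h) ≃ₐ[ℚ] Module.End ℚ (Fin n → ℚ) :=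
    AlgEquiv.ofLinearEquiv e0.conj
      (by ext v; simp [LinearEquiv.conj_apply, Module.End.one_apply])
      (by intro g g'; ext v; simp [LinearEquiv.conj_apply, Module.End.mul_apply])
  refine ⟨E.symm (Φ ((Algebra.lmul ℚ (AdjoinRoot h)) t)), ?_⟩
  apply E.injective
  rw [← Polynomial.aeval_algHom_apply E, AlgEquiv.apply_symm_apply,
    Polynomial.aeval_algHom_apply Φ,
    Polynomial.aeval_algHom_apply (Algebra.lmul ℚ (AdjoinRoot h))]
  refine LinearMap.ext fun v => ?_
  have hΦ : Φ ((Algebra.lmul ℚ (AdjoinRoot h)) (aeval t p)) v = e0 ((aeval t p) * e0.symm v) := by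
    simp [Φ, LinearEquiv.conj_apply]
  rw [hΦ, key (e0.symm v), LinearEquiv.apply_symm_apply]
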